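/- arXiv:0905.0939 — 2 statements merged into one kernel-verified Lean document; each statement's English description precedes it below -/
import Mathlib

section
/- Let n ≥ 1, let B be a positive definite Hermitian n×n complex matrix, let C be a Hermitian n×n complex matrix, and let T > 0 be a real number such that B + T•C is positive semidefinite. Then for every t ∈ [0, T], the determinants of B + t•C and of B (which are nonnegative real numbers) satisfy det(B + t•C) ≥ ((T−t)/T)^n · det(B). -/
open scoped ComplexOrder

open Matrix

lemma aux_smul_posSemidef {n : ℕ} {M : Matrix (Fin n) (Fin n) ℂ} (hM : M.PosSemidef)
    {c : ℝ} (hc : 0 ≤ c) : (c • M).PosSemidef := by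
  exact hM.smul hc

lemma aux_smul_posDef {n : ℕ} {M : Matrix (Fin n) (Fin n) ℂ} (hM : M.PosDef)
    {c : ℝ} (hc : 0 < c) : (c • M).PosDef := by
  exact hM.smul hc

lemma aux_det_nonneg {n : ℕ} {M : Matrix (Fin n) (Fin n) ℂ} (hM : M.PosSemidef) :
    0 ≤ M.det := by
  rw [hM.isHermitian.det_eq_prod_eigenvalues]
  apply Finset.prod_nonneg
  intro i _
  exact Complex.zero_le_real.mpr (hM.eigenvalues_nonneg i)

lemma aux_det_one_add {n : ℕ} {M : Matrix (Fin n) (Fin n) ℂ} (hM : M.PosSemidef) :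
    1 ≤ (1 + M).det := by
  have hH := hM.isHermitian
  set U : Matrix (Fin n) (Fin n) ℂ := (hH.eigenvectorUnitary : Matrix (Fin n) (Fin n) ℂ) with hUdef
  set D : Matrix (Fin n) (Fin n) ℂ := diagonal (RCLike.ofReal ∘ hH.eigenvalues) with hDdef
  have hU : U * star U = 1 := (Matrix.mem_unitaryGroup_iff).mp hH.eigenvectorUnitary.2
  have hspec := hH.spectral_theorem
  rw [Unitary.conjStarAlgAut_apply] at hspec
  have key : (1 + M) = U * (1 + D) * star U := by
    rw [mul_add, add_mul, mul_one, hU, ← hspec]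
  have hdetU : U.det * (star U).det = 1 := by
    rw [← det_mul, hU, det_one]
  have hdiag : (1 + D).det = ((∏ i, (1 + hH.eigenvalues i) : ℝ) : ℂ) := by
    rw [hDdef, ← diagonal_one, diagonal_add, det_diagonal]
    push_cast
    rfl
  have hprod : (1:ℝ) ≤ ∏ i, (1 + hH.eigenvalues i) := by
    calc (1:ℝ) = ∏ _i : Fin n, (1:ℝ) := by simp
      _ ≤ ∏ i, (1 + hH.eigenvalues i) := by
          apply Finset.prod_le_prod
          · intro i _; norm_num
          · intro i _; linarith [hM.eigenvalues_nonneg i]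
  calc (1:ℂ) = ((1:ℝ):ℂ) := by norm_num
    _ ≤ ((∏ i, (1 + hH.eigenvalues i) : ℝ) : ℂ) := Complex.real_le_real.mpr hprod
    _ = (1 + M).det := by
        rw [key, det_mul, det_mul, mul_right_comm, hdetU, one_mul, hdiag]

open scoped MatrixOrder in
lemma aux_det_mono {n : ℕ} {A D : Matrix (Fin n) (Fin n) ℂ}
    (hA : A.PosDef) (hD : D.PosSemidef) : A.det ≤ (A + D).det := by
  have hAs := hA.posSemidef
  set S : Matrix (Fin n) (Fin n) ℂ := CFC.sqrt A with hSdef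
  have hS : S.PosSemidef := (CFC.sqrt_nonneg A).posSemidef
  have hSq : S * S = A := by
    have := CFC.sq_sqrt A hAs.nonneg; rwa [pow_two] at this
  have hdetS : S.det * S.det = A.det := by rw [← det_mul, hSq]
  have hdetA : 0 < A.det := hA.det_pos
  have hSdet : IsUnit S.det := by
    refine isUnit_iff_ne_zero.mpr fun h => ?_
    rw [h, mul_zero] at hdetS
    exact hdetA.ne' hdetS.symm
  set M : Matrix (Fin n) (Fin n) ℂ := S⁻¹ * D * S⁻¹ with hMdef
  have hM : M.PosSemidef := by
    have h1 := hD.conjTranspose_mul_mul_same (B := S⁻¹)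
    rwa [hS.isHermitian.inv.eq] at h1
  have key : A + D = S * (1 + M) * S := by
    rw [mul_add, mul_one, add_mul, hSq, hMdef]
    congr 1
    simp only [← mul_assoc]
    rw [Matrix.mul_nonsing_inv _ hSdet, one_mul, mul_assoc,
      Matrix.nonsing_inv_mul _ hSdet, mul_one]
  calc A.det = A.det * 1 := (mul_one _).symm
    _ ≤ A.det * (1 + M).det :=
        mul_le_mul_of_nonneg_left (aux_det_one_add hM) hdetA.le
    _ = (A + D).det := by
        rw [key, det_mul, det_mul, mul_right_comm, hdetS]

/-- If `B` is positive definite Hermitian, `C` is Hermitian, `T > 0` and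
`B + T • C` is positive semidefinite, then for every `t ∈ [0, T]` the determinants of
`B + t • C` and of `B` are nonnegative real numbers (nonnegative in the order on `ℂ`,
where `0 ≤ z` means `z` is a nonnegative real) and satisfy
`det (B + t • C) ≥ ((T - t)/T)^n * det B`. -/
theorem stmt_1 (n : ℕ) (hn : 1 ≤ n)
    (B C : Matrix (Fin n) (Fin n) ℂ)
    (hB : B.PosDef) (hC : C.IsHermitian)
    (T : ℝ) (hT : 0 < T)
    (hBTC : (B + T • C).PosSemidef) :
    ∀ t ∈ Set.Icc (0 : ℝ) T,
      0 ≤ B.det ∧ 0 ≤ (B + t • C).det ∧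
      ((((T - t) / T) ^ n : ℝ) : ℂ) * B.det ≤ (B + t • C).det := by
  intro t ht
  obtain ⟨ht0, htT⟩ := ht
  set s : ℝ := t / T with hs
  set a : ℝ := (T - t) / T with ha
  have ha0 : 0 ≤ a := div_nonneg (by linarith) hT.le
  have hs0 : 0 ≤ s := div_nonneg ht0 hT.le
  have has : a + s = 1 := by
    rw [ha, hs, ← add_div, sub_add_cancel, div_self hT.ne']
  have hsT : s * T = t := div_mul_cancel₀ t hT.ne'
  have hkey : B + t • C = a • B + s • (B + T • C) := by
    rw [smul_add, smul_smul, hsT, ← add_assoc, ← add_smul, has, one_smul]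
  have hDpsd : (s • (B + T • C)).PosSemidef := aux_smul_posSemidef hBTC hs0
  have hpsd : (B + t • C).PosSemidef := by
    rw [hkey]
    exact (aux_smul_posSemidef hB.posSemidef ha0).add hDpsd
  refine ⟨hB.det_pos.le, aux_det_nonneg hpsd, ?_⟩
  by_cases h : t = T
  · have hz : a = 0 := by rw [ha, h]; simp
    rw [hz, zero_pow (by omega : n ≠ 0), Complex.ofReal_zero, zero_mul]
    exact aux_det_nonneg hpsd
  · have hapos : 0 < a := by
      rw [ha]
      apply div_pos _ hT
      rcases lt_or_eq_of_le htT with h' | h'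
      · linarith
      · exact absurd h' h
    have hfinal : ((a ^ n : ℝ) : ℂ) * B.det ≤ (a • B + s • (B + T • C)).det := by
      calc ((a ^ n : ℝ) : ℂ) * B.det = (a • B).det := by
            rw [Matrix.det_smul_of_tower, Fintype.card_fin, Complex.real_smul,
              Complex.ofReal_pow]
        _ ≤ _ := aux_det_mono (aux_smul_posDef hB hapos) hDpsd
    rw [← hkey] at hfinal
    exact hfinal
end

section
/- Let X be a nonempty compact topological space, let T ∈ (0, ∞), and let φ : [0, T) × X → ℝ be continuous such that the partial derivative ∂φ/∂t exists at every point of (0, T) × X and is continuous on (0, T) × X. Let f : [0, T) → ℝ be continuous, and suppose that for every t ∈ (0, T) and every x ∈ X at which φ(t, ·) attains its maximum over X, one has ∂φ/∂t(t, x) ≤ f(t). Then for every t ∈ [0, T), max_{x∈X} φ(t, x) ≤ max_{x∈X} φ(0, x) + ∫₀ᵗ f(s) ds. -/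
open Set Filter Topology

/-- a scalar maximum principle (Hamilton's trick). Let `X` be a nonempty
compact topological space, `T ∈ (0, ∞)`, and `φ : [0,T) × X → ℝ` continuous whose time
derivative `φt = ∂φ/∂t` exists at every point of `(0,T) × X` and is continuous there.
Let `f : [0,T) → ℝ` be continuous, and suppose that for every `t ∈ (0,T)` and every
`x ∈ X` at which `φ t` attains its maximum over `X`, one has `φt t x ≤ f t`. Then for
every `t ∈ [0, T)`, `max_x φ t x ≤ max_x φ 0 x + ∫₀ᵗ f`. -/
theorem stmt_4 {X : Type*} [TopologicalSpace X] [CompactSpace X] [Nonempty X]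
    (T : ℝ) (hT : 0 < T)
    (φ φt : ℝ → X → ℝ) (f : ℝ → ℝ)
    (hφcont : ContinuousOn (fun p : ℝ × X => φ p.1 p.2) (Set.Ico 0 T ×ˢ Set.univ))
    (hderiv : ∀ t ∈ Set.Ioo (0 : ℝ) T, ∀ x : X, HasDerivAt (fun s => φ s x) (φt t x) t)
    (hφtcont : ContinuousOn (fun p : ℝ × X => φt p.1 p.2) (Set.Ioo 0 T ×ˢ Set.univ))
    (hfcont : ContinuousOn f (Set.Ico 0 T))
    (hmax : ∀ t ∈ Set.Ioo (0 : ℝ) T, ∀ x : X, (∀ y : X, φ t y ≤ φ t x) → φt t x ≤ f t) :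
    ∀ t ∈ Set.Ico (0 : ℝ) T,
      (⨆ x : X, φ t x) ≤ (⨆ x : X, φ 0 x) + ∫ s in (0 : ℝ)..t, f s := by
  set Φ : ℝ → ℝ := fun t => ⨆ x : X, φ t x with hΦdef
  -- continuity of each time slice
  have contSlice : ∀ t ∈ Ico (0:ℝ) T, Continuous (φ t) := by
    intro t ht
    exact hφcont.comp_continuous (continuous_const.prodMk continuous_id)
      (fun x => ⟨ht, trivial⟩)
  have bddA : ∀ t ∈ Ico (0:ℝ) T, BddAbove (Set.range (φ t)) := fun t ht =>
    (isCompact_range (contSlice t ht)).bddAbove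
  have attain : ∀ t ∈ Ico (0:ℝ) T, ∃ x : X, (∀ y, φ t y ≤ φ t x) ∧ Φ t = φ t x := by
    intro t ht
    obtain ⟨x, -, hx⟩ := isCompact_univ.exists_isMaxOn univ_nonempty
      (contSlice t ht).continuousOn
    exact ⟨x, fun y => hx (mem_univ y),
      le_antisymm (ciSup_le fun y => hx (mem_univ y)) (le_ciSup (bddA t ht) x)⟩
  -- time-continuity of slices
  have contTime : ∀ y : X, ContinuousOn (fun s => φ s y) (Ico 0 T) := by
    intro y
    have : ContinuousOn ((fun p : ℝ × X => φ p.1 p.2) ∘ fun s => (s, y)) (Ico 0 T) :=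
      hφcont.comp ((continuous_id.prodMk continuous_const).continuousOn)
        (fun s hs => ⟨hs, trivial⟩)
    exact this
  -- continuity of Φ on [0,T)
  have contΦ : ContinuousOn Φ (Ico 0 T) := by
    rw [continuousOn_iff_continuous_restrict]
    have h1 : Continuous fun p : (Ico (0:ℝ) T) × X => φ p.1.1 p.2 :=
      hφcont.comp_continuous
        ((continuous_subtype_val.comp continuous_fst).prodMk continuous_snd)
        (fun q => ⟨q.1.2, trivial⟩)
    have h2 := IsCompact.continuous_sSup (isCompact_univ (X := X))
      (f := fun (t : Ico (0:ℝ) T) (x : X) => φ t.1 x) h1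
    have : (Ico (0:ℝ) T).restrict Φ = fun t : Ico (0:ℝ) T =>
        sSup ((fun x : X => φ t.1 x) '' univ) := by
      funext t
      simp [hΦdef, Set.image_univ, iSup, Set.restrict]
    show Continuous ((Ico (0:ℝ) T).restrict Φ)
    rw [this]
    exact h2
  -- Hamilton's trick: right slope bound on Φ
  have slope_bound : ∀ t0 ∈ Ioo (0:ℝ) T, ∀ r, f t0 < r →
      ∀ᶠ z in 𝓝[>] t0, slope Φ t0 z < r := by
    intro t0 ht0 r hr
    set r' := (f t0 + r) / 2 with hr'def
    have hr'1 : f t0 < r' := by simp only [hr'def]; linarith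
    have hr'2 : r' < r := by simp only [hr'def]; linarith
    have ht0' : t0 ∈ Ico (0:ℝ) T := ⟨ht0.1.le, ht0.2⟩
    obtain ⟨x0, hx0, hΦx0⟩ := attain t0 ht0'
    set M := Φ t0 with hMdef
    -- the maximizer set K
    set K := {x : X | M ≤ φ t0 x} with hKdef
    have hKcomp : IsCompact K :=
      (isClosed_le continuous_const (contSlice t0 ht0')).isCompact
    -- tube around {t0} × K inside the region where φt < r'
    set V := (Ioo (0:ℝ) T ×ˢ (univ : Set X)) ∩ (fun p : ℝ × X => φt p.1 p.2) ⁻¹' Iio r'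
      with hVdef
    have hVopen : IsOpen V :=
      hφtcont.isOpen_inter_preimage (isOpen_Ioo.prod isOpen_univ) isOpen_Iio
    have hsubV : ({t0} : Set ℝ) ×ˢ K ⊆ V := by
      rintro ⟨s, x⟩ ⟨hs, hx⟩
      rw [Set.mem_singleton_iff] at hs
      subst hs
      refine ⟨⟨ht0, trivial⟩, ?_⟩
      exact lt_of_le_of_lt
        (hmax _ ht0 x (fun y => le_trans (hx0 y) (le_trans hΦx0.symm.le hx))) hr'1
    obtain ⟨u, v, huo, hvo, hu, hv, huv⟩ :=
      generalized_tube_lemma isCompact_singleton hKcomp hVopen hsubV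
    obtain ⟨δ1, hδ1, hball1⟩ := Metric.isOpen_iff.1 huo t0 (hu rfl)
    -- eventually, maximizers stay in v
    have key : ∀ᶠ z in 𝓝[>] t0, ∀ y : X, (∀ w, φ z w ≤ φ z y) → y ∈ v := by
      rcases eq_empty_or_nonempty (vᶜ : Set X) with hC | hC
      · filter_upwards with z y _
        by_contra h
        exact absurd (show y ∈ (vᶜ : Set X) from h) (by rw [hC]; exact notMem_empty y)
      · set C := (vᶜ : Set X) with hCdef
        have hCcomp : IsCompact C := (hvo.isClosed_compl).isCompact
        obtain ⟨c, hcC, hcmax⟩ := hCcomp.exists_isMaxOn hC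
          ((contSlice t0 ht0').continuousOn)
        set m := φ t0 c with hmdef
        have hmM : m < M := by
          have : c ∉ K := fun hcK => hcC (hv hcK)
          have h1 : ¬ M ≤ φ t0 c := this
          have h2 : φ t0 c ≤ M := hΦx0 ▸ hx0 c
          exact lt_of_le_of_ne h2 (fun h => h1 h.ge)
        set m' := (m + M) / 2 with hm'def
        have hmm' : m < m' := by simp only [hm'def]; linarith
        have hm'M : m' < M := by simp only [hm'def]; linarith
        -- tube around {t0} × C inside the region where φ < m'
        set W := (Ioo (0:ℝ) T ×ˢ (univ : Set X)) ∩ (fun p : ℝ × X => φ p.1 p.2) ⁻¹' Iio m'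
        have hWopen : IsOpen W :=
          (hφcont.mono (prod_mono_left Ioo_subset_Ico_self)).isOpen_inter_preimage
            (isOpen_Ioo.prod isOpen_univ) isOpen_Iio
        have hsubW : ({t0} : Set ℝ) ×ˢ C ⊆ W := by
          rintro ⟨s, x⟩ ⟨hs, hx⟩
          rw [Set.mem_singleton_iff] at hs
          subst hs
          exact ⟨⟨ht0, trivial⟩, lt_of_le_of_lt (hcmax hx) hmm'⟩
        obtain ⟨u2, v2, hu2o, hv2o, hu2, hv2, hu2v2⟩ :=
          generalized_tube_lemma isCompact_singleton hCcomp hWopen hsubW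
        -- nearby in time, φ · x0 stays above m'
        have hx0cont : ContinuousAt (fun s => φ s x0) t0 :=
          (contTime x0).continuousAt
            (mem_of_superset (isOpen_Ioo.mem_nhds ht0) Ioo_subset_Ico_self)
        have hev1 : ∀ᶠ z in 𝓝 t0, m' < φ z x0 :=
          (tendsto_order.1 hx0cont).1 m' (by have h := hm'M; rw [hΦx0] at h; exact h)
        have hev2 : ∀ᶠ z in 𝓝 t0, z ∈ u2 := hu2o.mem_nhds (hu2 rfl)
        filter_upwards [nhdsWithin_le_nhds hev1, nhdsWithin_le_nhds hev2] with z h1 h2 y hy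
        by_contra hyv
        have hyC : y ∈ C := hyv
        have : (z, y) ∈ W := hu2v2 ⟨h2, hv2 hyC⟩
        exact absurd (lt_of_lt_of_le (lt_trans this.2 h1) (hy x0)) (lt_irrefl _)
    -- combine
    have hevball : ∀ᶠ z in 𝓝[>] t0, z ∈ Metric.ball t0 δ1 :=
      nhdsWithin_le_nhds (Metric.ball_mem_nhds t0 hδ1)
    have hevT : ∀ᶠ z in 𝓝[>] t0, z < T := nhdsWithin_le_nhds (Iio_mem_nhds ht0.2)
    filter_upwards [key, hevball, hevT, self_mem_nhdsWithin] with z hkey hzball hzT hzt0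
    have hzt0' : t0 < z := hzt0
    have hz' : z ∈ Ico (0:ℝ) T := ⟨(ht0.1.trans hzt0').le, hzT⟩
    obtain ⟨y, hy, hΦz⟩ := attain z hz'
    have hyv : y ∈ v := hkey y hy
    -- mean value theorem on [t0, z]
    have hIccsub : Icc t0 z ⊆ Ico 0 T := fun s hs => ⟨ht0.1.le.trans hs.1, hs.2.trans_lt hzT⟩
    have hcont : ContinuousOn (fun s => φ s y) (Icc t0 z) := (contTime y).mono hIccsub
    have hder : ∀ s ∈ Ioo t0 z, HasDerivAt (fun s => φ s y) (φt s y) s := fun s hs =>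
      hderiv s ⟨ht0.1.trans hs.1, hs.2.trans hzT⟩ y
    obtain ⟨ξ, hξ, hξeq⟩ := exists_hasDerivAt_eq_slope (fun s => φ s y) (fun s => φt s y)
      hzt0' hcont hder
    have hξu : ξ ∈ u := by
      apply hball1
      rw [Metric.mem_ball, Real.dist_eq, abs_of_pos (sub_pos.2 hξ.1)]
      have hzd : z - t0 < δ1 := by
        have := hzball
        rw [Metric.mem_ball, Real.dist_eq, abs_of_pos (sub_pos.2 hzt0')] at this
        exact this
      linarith [hξ.2]
    have hφtξ : φt ξ y < r' := by
      have := (huv (Set.mk_mem_prod hξu hyv)).2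
      simpa using this
    have hpos : (0:ℝ) < z - t0 := sub_pos.2 hzt0'
    have hΦle : Φ z - Φ t0 ≤ φ z y - φ t0 y := by
      have h1 : φ t0 y ≤ Φ t0 := (hx0 y).trans hΦx0.ge
      have h2 : Φ z = φ z y := hΦz
      linarith
    have hslope : slope Φ t0 z = (Φ z - Φ t0) / (z - t0) := by
      rw [slope_def_field]
    rw [hslope]
    calc (Φ z - Φ t0) / (z - t0) ≤ (φ z y - φ t0 y) / (z - t0) := by
          exact div_le_div_of_nonneg_right hΦle hpos.le
      _ = φt ξ y := by rw [hξeq]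
      _ < r' := hφtξ
      _ < r := hr'2
  -- main argument
  intro t ht
  show Φ t ≤ Φ 0 + ∫ s in (0:ℝ)..t, f s
  rcases eq_or_lt_of_le ht.1 with h0 | h0
  · rw [← h0]
    simp
  · -- step estimate from a > 0
    have hstep : ∀ a ∈ Ioc (0:ℝ) t, Φ t ≤ Φ a + ∫ s in a..t, f s := by
      intro a ha
      have hsub : Icc a t ⊆ Ico 0 T := fun s hs =>
        ⟨ha.1.le.trans hs.1, hs.2.trans_lt ht.2⟩
      have hsub' : Icc a t ⊆ Ioo 0 T := fun s hs =>
        ⟨ha.1.trans_le hs.1, hs.2.trans_lt ht.2⟩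
      have hfc : ContinuousOn f (Icc a t) := hfcont.mono hsub
      have hfint : MeasureTheory.IntegrableOn f (Icc a t) := hfc.integrableOn_Icc
      have hB : ContinuousOn (fun s => Φ a + ∫ x in a..s, f x) (Icc a t) := by
        refine continuousOn_const.add ?_
        have := intervalIntegral.continuousOn_primitive_interval
          (a := a) (b := t) (f := f) (μ := MeasureTheory.volume)
          (by rwa [uIcc_of_le ha.2])
        exact this.mono (by rw [uIcc_of_le ha.2])
      have hB' : ∀ s ∈ Ico a t, HasDerivWithinAt (fun w => Φ a + ∫ x in a..w, f x)
          (f s) (Ici s) s := by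
        intro s hs
        have hsmem : s ∈ Ioo 0 T := hsub' ⟨hs.1, hs.2.le⟩
        have hint : IntervalIntegrable f MeasureTheory.volume a s := by
          apply ContinuousOn.intervalIntegrable
          rw [uIcc_of_le hs.1]
          exact hfc.mono (Icc_subset_Icc le_rfl hs.2.le)
        have hfcIoo : ContinuousOn f (Ioo 0 T) := hfcont.mono Ioo_subset_Ico_self
        have hca : ContinuousAt f s := hfcIoo.continuousAt (isOpen_Ioo.mem_nhds hsmem)
        have hmeas : StronglyMeasurableAtFilter f (𝓝 s) :=
          hfcIoo.stronglyMeasurableAtFilter isOpen_Ioo s hsmem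
        exact ((intervalIntegral.integral_hasDerivAt_right hint hmeas hca).const_add
          (Φ a)).hasDerivWithinAt
      have hbound : ∀ s ∈ Ico a t, ∀ r, f s < r → ∃ᶠ z in 𝓝[>] s, slope Φ s z < r := by
        intro s hs r hr
        exact (slope_bound s (hsub' ⟨hs.1, hs.2.le⟩) r hr).frequently
      have := image_le_of_liminf_slope_right_le_deriv_boundary (contΦ.mono hsub)
        (by simp) hB hB' hbound
      exact this (right_mem_Icc.2 ha.2)
    -- limit a → 0⁺
    have hTen1 : Tendsto Φ (𝓝[>] (0:ℝ)) (𝓝 (Φ 0)) := by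
      have h0m : Ico (0:ℝ) T ∈ 𝓝[>] (0:ℝ) :=
        mem_of_superset (Ioo_mem_nhdsGT_of_mem ⟨le_rfl, hT⟩) Ioo_subset_Ico_self
      exact (contΦ 0 ⟨le_rfl, hT⟩).mono_left (nhdsWithin_le_of_mem h0m)
    have hTen2 : Tendsto (fun a => ∫ s in a..t, f s) (𝓝[>] (0:ℝ))
        (𝓝 (∫ s in (0:ℝ)..t, f s)) := by
      have hIccsub : Icc (0:ℝ) t ⊆ Ico 0 T := fun s hs => ⟨hs.1, hs.2.trans_lt ht.2⟩
      have hint : MeasureTheory.IntegrableOn f (uIcc t 0) := by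
        rw [uIcc_comm, uIcc_of_le h0.le]
        exact (hfcont.mono hIccsub).integrableOn_Icc
      have h1 : ContinuousOn (fun a => ∫ s in t..a, f s) (uIcc t 0) :=
        intervalIntegral.continuousOn_primitive_interval hint
      have h2 : ContinuousOn (fun a => ∫ s in a..t, f s) (Icc 0 t) := by
        have := h1.neg
        rw [uIcc_comm, uIcc_of_le h0.le] at this
        exact this.congr (fun a _ => (intervalIntegral.integral_symm t a))
      have h0m : Icc (0:ℝ) t ∈ 𝓝[>] (0:ℝ) :=
        mem_of_superset (Ioo_mem_nhdsGT_of_mem ⟨le_rfl, h0⟩) Ioo_subset_Icc_self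
      exact (h2 0 ⟨le_rfl, h0.le⟩).mono_left (nhdsWithin_le_of_mem h0m)
    have hfin : ∀ᶠ a in 𝓝[>] (0:ℝ), Φ t ≤ Φ a + ∫ s in a..t, f s := by
      filter_upwards [Ioc_mem_nhdsGT_of_mem ⟨le_rfl, h0⟩] with a ha using hstep a ha
    exact ge_of_tendsto (hTen1.add hTen2) hfin
end
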